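/- Let ρ_BC be a bipartite density matrix with spectral decomposition ρ_BC = ∑_i q_i |i_BC⟩⟨i_BC|, q_i > 0, ⟨i|j⟩ = δ_ij. If Tr_B |i_BC⟩⟨j_BC| = δ_ij ρ_C for all i,j, then S(ρ_BC) + S(ρ_C) − S(ρ_B) = 0, i.e. the Araki–Lieb inequality is saturated. -/

import Mathlib

open Matrix Kronecker ComplexOrder

/-- Von Neumann entropy `S(ρ) = -Tr(ρ ln ρ)`, computed via eigenvalues. -/
noncomputable def vN {n : Type} [Fintype n] [DecidableEq n] (ρ : Matrix n n ℂ) : ℝ :=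
  if h : ρ.IsHermitian then -∑ i, h.eigenvalues i * Real.log (h.eigenvalues i) else 0

/-- A density matrix: positive semidefinite with unit trace. -/
def IsDensity {n : Type} [Fintype n] (ρ : Matrix n n ℂ) : Prop :=
  ρ.PosSemidef ∧ ρ.trace = 1

/-- Partial trace over the left tensor factor. -/
noncomputable def ptraceLeft {a b : Type} [Fintype a] [Fintype b]
    (M : Matrix (a × b) (a × b) ℂ) : Matrix b b ℂ :=
  Matrix.of fun i j => ∑ k, M (k, i) (k, j)

/-- Partial trace over the right tensor factor. -/
noncomputable def ptraceRight {a b : Type} [Fintype a] [Fintype b]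
    (M : Matrix (a × b) (a × b) ℂ) : Matrix a a ℂ :=
  Matrix.of fun i j => ∑ k, M (i, k) (j, k)

section AuxArakiLieb
open Polynomial

lemma charpoly_unitary_conj {n : Type} [Fintype n] [DecidableEq n]
    (U : Matrix n n ℂ) (hU : U * Uᴴ = 1) (D : Matrix n n ℂ) :
    (U * D * Uᴴ).charpoly = D.charpoly := by
  have h2 : Uᴴ * U = 1 := mul_eq_one_comm.mp hU
  set f := RingHom.mapMatrix (m := n) (C : ℂ →+* ℂ[X]) with hf
  have hcomm : ∀ (M : Matrix n n ℂ[X]), M * Matrix.scalar n (X : ℂ[X]) = Matrix.scalar n (X : ℂ[X]) * M := by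
    intro M
    ext i j
    simp [Matrix.scalar, Matrix.mul_diagonal, Matrix.diagonal_mul, mul_comm]
  have hfmul : ∀ (A B₂ : Matrix n n ℂ), f (A * B₂) = f A * f B₂ := fun A B₂ => map_mul f A B₂
  have hfone : f (1 : Matrix n n ℂ) = 1 := map_one f
  have key : charmatrix (U * D * Uᴴ) = f U * charmatrix D * f Uᴴ := by
    have e1 : f U * charmatrix D * f Uᴴ
        = Matrix.scalar n (X : ℂ[X]) * (f U * f Uᴴ) - f U * C.mapMatrix D * f Uᴴ := by
      unfold charmatrix
      rw [mul_sub, sub_mul]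
      congr 1
      rw [hcomm (f U), mul_assoc]
    rw [e1, ← hfmul, hU, hfone, mul_one, ← hfmul, ← hfmul]
    rfl
  have hUU : f Uᴴ * f U = 1 := by rw [← hfmul, h2, hfone]
  rw [Matrix.charpoly, Matrix.charpoly, key, det_mul, det_mul,
    show (f U).det * (charmatrix D).det * (f Uᴴ).det
      = (charmatrix D).det * ((f Uᴴ) * (f U)).det from by rw [det_mul]; ring,
    hUU, det_one, mul_one]

lemma charpoly_diagonal' {n : Type} [Fintype n] [DecidableEq n] (d : n → ℂ) :
    (diagonal d).charpoly = ∏ i, (X - C (d i)) := by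
  have h : charmatrix (diagonal d) = diagonal (fun i => X - C (d i)) := by
    ext i j
    by_cases h : i = j
    · subst h; simp [charmatrix_apply, diagonal_apply]
    · simp [charmatrix_apply, diagonal_apply, h]
  rw [Matrix.charpoly, h, det_diagonal]

lemma sum_fun_eigs {n : Type} [Fintype n] [DecidableEq n]
    (U V : Matrix n n ℂ) (hU : U * Uᴴ = 1) (hV : V * Vᴴ = 1)
    (d e : n → ℝ)
    (h : U * diagonal (fun i => (d i : ℂ)) * Uᴴ = V * diagonal (fun i => (e i : ℂ)) * Vᴴ)
    (g : ℝ → ℝ) : ∑ i, g (d i) = ∑ i, g (e i) := by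
  have h1 : (diagonal (fun i => (d i : ℂ))).charpoly
      = (diagonal (fun i => (e i : ℂ))).charpoly := by
    rw [← charpoly_unitary_conj U hU, h, charpoly_unitary_conj V hV]
  rw [charpoly_diagonal', charpoly_diagonal'] at h1
  have hprod : ∀ (c : n → ℝ), (∏ i, (X - Polynomial.C ((c i : ℂ)))) =
      ((Finset.univ.val.map (fun i => (c i : ℂ))).map (fun a => X - Polynomial.C a)).prod := by
    intro c
    rw [Multiset.map_map, Finset.prod]
    rfl
  have h2 : (Finset.univ.val.map (fun i => (d i : ℂ)))
      = (Finset.univ.val.map (fun i => (e i : ℂ))) := by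
    have hd := Polynomial.roots_multiset_prod_X_sub_C
      (Finset.univ.val.map (fun i => (d i : ℂ)))
    have he := Polynomial.roots_multiset_prod_X_sub_C
      (Finset.univ.val.map (fun i => (e i : ℂ)))
    rw [← hd, ← he, ← hprod, ← hprod, h1]
  have h3 := congrArg (fun m : Multiset ℂ => (m.map (fun z : ℂ => g z.re)).sum) h2
  simp only [Multiset.map_map, Function.comp_def, Complex.ofReal_re] at h3
  exact h3

lemma sum_g_eigenvalues {n ι : Type} [Fintype n] [DecidableEq n] [Fintype ι] [DecidableEq ι]
    (A : Matrix n n ℂ) (hA : A.IsHermitian)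
    (q : ι → ℝ) (v : ι → n → ℂ)
    (honb : ∀ i j, ∑ x, star (v i x) * v j x = if i = j then (1:ℂ) else 0)
    (hdecomp : A = ∑ i, q i • Matrix.of fun x y => v i x * star (v i y))
    (g : ℝ → ℝ) (hg : g 0 = 0) :
    ∑ k, g (hA.eigenvalues k) = ∑ i, g (q i) := by
  classical
  set v' : ι → EuclideanSpace ℂ n := fun i => (WithLp.equiv 2 (n → ℂ)).symm (v i) with hv'
  have horth : Orthonormal ℂ v' := by
    rw [orthonormal_iff_ite]
    intro i j
    simpa [PiLp.inner_apply, RCLike.inner_apply, v', mul_comm] using honb i j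
  have hcard : Fintype.card ι ≤ Fintype.card n := by
    have h := horth.linearIndependent.fintype_card_le_finrank
    rwa [finrank_euclideanSpace] at h
  obtain ⟨f⟩ := Function.Embedding.nonempty_of_card_le hcard
  set v₀ : n → EuclideanSpace ℂ n := Function.extend f v' 0 with hv₀
  have hres : Orthonormal ℂ ((Set.range f).restrict v₀) := by
    have hcomp : (Set.range f).restrict v₀ = v' ∘ (Equiv.ofInjective f f.injective).symm := by
      funext a
      have ha : f ((Equiv.ofInjective f f.injective).symm a) = a :=
        Equiv.apply_ofInjective_symm f.injective a
      simp only [Set.restrict_apply, Function.comp_apply, hv₀]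
      show Function.extend (⇑f) v' 0 (a : n) = v' ((Equiv.ofInjective f f.injective).symm a)
      conv_lhs => rw [← ha]
      rw [f.injective.extend_apply]
    rw [hcomp]
    exact horth.comp _ (Equiv.ofInjective f f.injective).symm.injective
  obtain ⟨b, hb⟩ := hres.exists_orthonormalBasis_extension_of_card_eq
    (by simp [finrank_euclideanSpace])
  set U : Matrix n n ℂ := Matrix.of fun x k => b k x with hUdef
  have hU : Uᴴ * U = 1 := by
    ext k l
    have := orthonormal_iff_ite.mp b.orthonormal k l
    rw [PiLp.inner_apply] at this
    simpa [mul_apply, conjTranspose_apply, RCLike.inner_apply, one_apply, U, mul_comm] using this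
  have hU' : U * Uᴴ = 1 := mul_eq_one_comm.mp hU
  set q' : n → ℝ := Function.extend f q 0 with hq'
  have hbf : ∀ i, b (f i) = v' i := by
    intro i
    rw [hb (f i) (Set.mem_range_self i), hv₀, f.injective.extend_apply]
  have hAeq : A = U * diagonal (fun k => (q' k : ℂ)) * Uᴴ := by
    ext x y
    have hrhs : (U * diagonal (fun k => (q' k : ℂ)) * Uᴴ) x y
        = ∑ k, (q' k : ℂ) * (b k x * star (b k y)) := by
      rw [mul_apply]
      refine Finset.sum_congr rfl fun k _ => ?_
      rw [mul_diagonal]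
      simp only [conjTranspose_apply, of_apply, U]
      ring
    rw [hrhs, hdecomp]
    simp only [Matrix.sum_apply, Matrix.smul_apply, Matrix.of_apply, Complex.real_smul]
    calc ∑ i : ι, (q i : ℂ) * (v i x * star (v i y))
        = ∑ i : ι, (q' (f i) : ℂ) * (b (f i) x * star (b (f i) y)) := by
          refine Finset.sum_congr rfl fun i _ => ?_
          rw [hq', f.injective.extend_apply q (0 : n → ℝ) i, hbf i]
          simp [v', WithLp.equiv_symm_apply]
      _ = ∑ k ∈ Finset.univ.map f, (q' k : ℂ) * (b k x * star (b k y)) :=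
          (Finset.sum_map Finset.univ f (fun k => (q' k : ℂ) * (b k x * star (b k y)))).symm
      _ = ∑ k : n, (q' k : ℂ) * (b k x * star (b k y)) := by
          refine Finset.sum_subset (Finset.subset_univ _) fun k _ hk => ?_
          have hnr : ¬ ∃ i, f i = k := by simpa [Finset.mem_map] using hk
          rw [hq', Function.extend_apply' q (0 : n → ℝ) k hnr]
          simp
  have hW : (hA.eigenvectorUnitary : Matrix n n ℂ) * (hA.eigenvectorUnitary : Matrix n n ℂ)ᴴ = 1 := by
    have := (Matrix.mem_unitaryGroup_iff).mp hA.eigenvectorUnitary.2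
    rwa [← star_eq_conjTranspose]
  have hspec : (hA.eigenvectorUnitary : Matrix n n ℂ)
      * diagonal (fun k => (hA.eigenvalues k : ℂ)) * (hA.eigenvectorUnitary : Matrix n n ℂ)ᴴ
      = U * diagonal (fun k => (q' k : ℂ)) * Uᴴ := by
    rw [← hAeq]
    conv_rhs => rw [hA.spectral_theorem]
    rfl
  have hmain := sum_fun_eigs _ U hW hU' hA.eigenvalues q' hspec g
  rw [hmain]
  calc ∑ k : n, g (q' k)
      = ∑ k ∈ Finset.univ.map f, g (q' k) := by
        refine (Finset.sum_subset (Finset.subset_univ _) fun k _ hk => ?_).symm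
        have hnr : ¬ ∃ i, f i = k := by simpa [Finset.mem_map] using hk
        rw [hq', Function.extend_apply' q (0 : n → ℝ) k hnr]
        simpa using hg
    _ = ∑ i : ι, g (q' (f i)) := Finset.sum_map Finset.univ f (fun k => g (q' k))
    _ = ∑ i : ι, g (q i) := Finset.sum_congr rfl fun i _ => by
        rw [hq', f.injective.extend_apply q (0 : n → ℝ) i]

end AuxArakiLieb

/-- If the eigenvectors of `ρ_BC` satisfy `Tr_B |i⟩⟨j| = δ_ij ρ_C`, then the Araki–Lieb
inequality is saturated: `S(ρ_BC) + S(ρ_C) − S(ρ_B) = 0`. -/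
theorem offdiagonal_implies_arakiLieb_saturation {B C ι : Type} [Fintype B] [DecidableEq B]
    [Fintype C] [DecidableEq C] [Fintype ι] [DecidableEq ι]
    (ρ : Matrix (B × C) (B × C) ℂ) (hρ : IsDensity ρ)
    (q : ι → ℝ) (v : ι → (B × C → ℂ))
    (hq : ∀ i, 0 < q i)
    (honb : ∀ i j, ∑ x, star (v i x) * v j x = if i = j then (1 : ℂ) else 0)
    (hdecomp : ρ = ∑ i, q i • Matrix.of fun x y => v i x * star (v i y))
    (hoff : ∀ i j, ptraceLeft (Matrix.of fun x y => v i x * star (v j y))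
              = (if i = j then (1 : ℂ) else 0) • ptraceLeft ρ) :
    vN ρ + vN (ptraceLeft ρ) - vN (ptraceRight ρ) = 0 := by
  classical
  obtain ⟨hpsd, htr⟩ := hρ
  have hρH : ρ.IsHermitian := hpsd.1
  have hιne : Nonempty ι := by
    by_contra h
    rw [not_nonempty_iff] at h
    rw [hdecomp] at htr
    simp [Finset.univ_eq_empty] at htr
  -- Hermitian partial traces
  have hCH : (ptraceLeft ρ).IsHermitian := by
    ext y y'
    simp only [conjTranspose_apply, ptraceLeft, Matrix.of_apply, star_sum]
    refine Finset.sum_congr rfl fun x _ => ?_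
    have h := congrFun (congrFun hρH (x, y)) (x, y')
    rwa [conjTranspose_apply] at h
  have hBH : (ptraceRight ρ).IsHermitian := by
    ext x x'
    simp only [conjTranspose_apply, ptraceRight, Matrix.of_apply, star_sum]
    refine Finset.sum_congr rfl fun y _ => ?_
    have h := congrFun (congrFun hρH (x, y)) (x', y)
    rwa [conjTranspose_apply] at h
  -- eigen-data of ρ_C
  set lam : C → ℝ := hCH.eigenvalues with hlamdef
  set W : Matrix C C ℂ := (hCH.eigenvectorUnitary : Matrix C C ℂ) with hWdef
  have hWW : W * Wᴴ = 1 := by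
    have := (Matrix.mem_unitaryGroup_iff).mp hCH.eigenvectorUnitary.2
    rwa [← star_eq_conjTranspose]
  have hWW' : Wᴴ * W = 1 := mul_eq_one_comm.mp hWW
  have hdiagC : Wᴴ * (ptraceLeft ρ) * W = diagonal (fun k => (lam k : ℂ)) := by
    have h := hCH.spectral_theorem
    rw [Unitary.conjStarAlgAut_apply, star_eq_conjTranspose] at h
    rw [h, ← hWdef, ← Matrix.mul_assoc, ← Matrix.mul_assoc, hWW', Matrix.one_mul,
      Matrix.mul_assoc, hWW', Matrix.mul_one]
    rfl
  have hspecC : ptraceLeft ρ = W * diagonal (fun k => (lam k : ℂ)) * Wᴴ := by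
    have h := hCH.spectral_theorem
    rw [Unitary.conjStarAlgAut_apply, star_eq_conjTranspose] at h
    exact h
  -- V matrices
  set V : ι → Matrix B C ℂ := fun i => Matrix.of fun x y => v i (x, y) with hVdef
  have hoffT : ∀ i j, (V j)ᴴ * V i = (if i = j then (1:ℂ) else 0) • (ptraceLeft ρ)ᵀ := by
    intro i j
    ext y' y
    have h := congrFun (congrFun (hoff i j) y) y'
    simp only [ptraceLeft, Matrix.of_apply, Matrix.smul_apply, smul_eq_mul] at h
    simp only [mul_apply, conjTranspose_apply, Matrix.of_apply, transpose_apply,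
      Matrix.smul_apply, ptraceLeft, smul_eq_mul, V]
    rw [← h]
    exact Finset.sum_congr rfl fun x _ => mul_comm _ _
  have hCpsd : (ptraceLeft ρ).PosSemidef := by
    obtain ⟨i0⟩ := hιne
    have h := hoffT i0 i0
    rw [if_pos rfl, one_smul] at h
    have h2 : ptraceLeft ρ = ((V i0)ᴴ * V i0)ᵀ := by rw [h, transpose_transpose]
    rw [h2]
    exact (posSemidef_conjTranspose_mul_self (V i0)).transpose
  have hlam : ∀ k, 0 ≤ lam k := fun k => hCpsd.eigenvalues_nonneg k
  -- traces
  have htrC : (ptraceLeft ρ).trace = 1 := by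
    rw [← htr]
    rw [Matrix.trace, Matrix.trace]
    simp only [Matrix.diag, ptraceLeft, Matrix.of_apply]
    rw [Fintype.sum_prod_type]
    exact Finset.sum_comm
  have hsumq : ∑ i, q i = 1 := by
    have h1 : ρ.trace = ∑ i, (q i : ℂ) := by
      rw [hdecomp, trace_sum]
      refine Finset.sum_congr rfl fun i _ => ?_
      rw [trace_smul]
      have h2 : (Matrix.of fun x y => v i x * star (v i y)).trace = 1 := by
        rw [Matrix.trace]
        have h3 : ∑ x, (Matrix.of fun x y => v i x * star (v i y)).diag x
            = ∑ x, star (v i x) * v i x :=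
          Finset.sum_congr rfl fun x _ => mul_comm _ _
        rw [h3, honb i i, if_pos rfl]
      rw [h2]
      simp [Complex.real_smul]
    rw [htr] at h1
    have h2 : ((∑ i, q i : ℝ) : ℂ) = 1 := by
      push_cast
      exact h1.symm
    exact_mod_cast h2
  have hsumlam : ∑ k, lam k = 1 := by
    have h1 : (ptraceLeft ρ).trace = ∑ k, (lam k : ℂ) := by
      rw [hspecC, Matrix.trace_mul_cycle, hWW', Matrix.one_mul, Matrix.trace_diagonal]
    rw [htrC] at h1
    have h2 : ((∑ k, lam k : ℝ) : ℂ) = 1 := by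
      push_cast
      exact h1.symm
    exact_mod_cast h2
  -- B marginal
  have hRB : ptraceRight ρ = ∑ i, q i • (V i * (V i)ᴴ) := by
    ext x x'
    simp only [ptraceRight, Matrix.of_apply, hdecomp, Matrix.sum_apply, Matrix.smul_apply,
      Complex.real_smul, mul_apply, conjTranspose_apply, V]
    rw [Finset.sum_comm]
    refine Finset.sum_congr rfl fun i _ => ?_
    rw [Finset.mul_sum]
  set Wc : Matrix C C ℂ := W.map star with hWcdef
  have hWcH : Wcᴴ = Wᵀ := by
    ext k y
    simp [Wc, conjTranspose_apply, transpose_apply, Matrix.map_apply]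
  have hWcT : (Wᴴ)ᵀ = Wc := by
    ext a b
    simp [conjTranspose_apply, transpose_apply, Matrix.map_apply, Wc]
  have hWcWcH : Wc * Wcᴴ = 1 := by
    rw [hWcH]
    have h : Wc * Wᵀ = (W * Wᴴ)ᵀ := by rw [transpose_mul, hWcT]
    rw [h, hWW, transpose_one]
  set Bm : ι → Matrix B C ℂ := fun i => V i * Wc with hBmdef
  have hVB : ∀ i, V i * (V i)ᴴ = Bm i * (Bm i)ᴴ := by
    intro i
    calc V i * (V i)ᴴ = V i * (Wc * Wcᴴ) * (V i)ᴴ := by rw [hWcWcH, Matrix.mul_one]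
    _ = Bm i * (Bm i)ᴴ := by
        rw [conjTranspose_mul]
        simp only [Bm]
        rw [Matrix.mul_assoc, Matrix.mul_assoc, Matrix.mul_assoc]
  have hGram : ∀ i j, (Bm j)ᴴ * Bm i
      = (if i = j then (1:ℂ) else 0) • diagonal (fun k => (lam k : ℂ)) := by
    intro i j
    have hT : Wᵀ * (ptraceLeft ρ)ᵀ * Wc = (Wᴴ * (ptraceLeft ρ) * W)ᵀ := by
      rw [transpose_mul, transpose_mul]
      rw [hWcT, Matrix.mul_assoc]
    calc (Bm j)ᴴ * Bm i = Wcᴴ * ((V j)ᴴ * V i) * Wc := by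
          simp only [Bm]
          rw [conjTranspose_mul]
          rw [Matrix.mul_assoc, Matrix.mul_assoc, Matrix.mul_assoc]
      _ = (if i = j then (1:ℂ) else 0) • (Wᵀ * (ptraceLeft ρ)ᵀ * Wc) := by
          rw [hoffT i j, hWcH, Matrix.mul_smul, Matrix.smul_mul]
      _ = (if i = j then (1:ℂ) else 0) • diagonal (fun k => (lam k : ℂ)) := by
          rw [hT, hdiagC, diagonal_transpose]
  have hGram' : ∀ (i j : ι) (k l : C), ∑ x, star (Bm j x l) * Bm i x k
      = (if i = j then (1:ℂ) else 0) * (if l = k then (lam l : ℂ) else 0) := by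
    intro i j k l
    have h := congrFun (congrFun (hGram i j) l) k
    simp only [mul_apply, conjTranspose_apply, Matrix.smul_apply, diagonal_apply,
      smul_eq_mul, mul_ite, mul_zero, mul_one] at h
    simpa using h
  -- normalized eigencolumns
  set w : {p : ι × C // lam p.2 ≠ 0} → B → ℂ :=
    fun p x => ((Real.sqrt (lam p.1.2))⁻¹ : ℝ) * Bm p.1.1 x p.1.2 with hwdef
  have honbw : ∀ p p' : {p : ι × C // lam p.2 ≠ 0},
      ∑ x, star (w p x) * w p' x = if p = p' then (1:ℂ) else 0 := by
    intro p p'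
    have hexp : ∑ x, star (w p x) * w p' x
        = (((Real.sqrt (lam p.1.2))⁻¹ : ℝ) : ℂ) * (((Real.sqrt (lam p'.1.2))⁻¹ : ℝ) : ℂ)
          * ∑ x, star (Bm p.1.1 x p.1.2) * Bm p'.1.1 x p'.1.2 := by
      rw [Finset.mul_sum]
      refine Finset.sum_congr rfl fun x _ => ?_
      simp only [w, star_mul', Complex.star_def, Complex.conj_ofReal]
      ring
    rw [hexp, hGram' p'.1.1 p.1.1 p'.1.2 p.1.2]
    by_cases hpp : p = p'
    · subst hpp
      rw [if_pos rfl, if_pos rfl, if_pos rfl]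
      have hl : 0 < lam p.1.2 := lt_of_le_of_ne (hlam _) (Ne.symm p.2)
      have hr : (Real.sqrt (lam p.1.2))⁻¹ * ((Real.sqrt (lam p.1.2))⁻¹ * lam p.1.2) = 1 := by
        rw [← mul_assoc, ← mul_inv, Real.mul_self_sqrt (hlam _)]
        exact inv_mul_cancel₀ p.2
      push_cast
      rw [one_mul, mul_assoc]
      exact_mod_cast congrArg (fun r : ℝ => (r : ℂ)) hr
    · rw [if_neg hpp]
      have hne : p.1.1 ≠ p'.1.1 ∨ p.1.2 ≠ p'.1.2 := by
        by_contra hcon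
        push_neg at hcon
        exact hpp (Subtype.ext (Prod.ext hcon.1 hcon.2))
      rcases hne with h | h
      · rw [if_neg (fun hh => h hh.symm)]
        ring
      · rw [if_neg h]
        simp
  -- decomposition of the B marginal
  have hzerocol : ∀ (i : ι) (k : C), lam k = 0 → ∀ x, Bm i x k = 0 := by
    intro i k hk x
    have h := hGram' i i k k
    rw [if_pos rfl, if_pos rfl, hk, Complex.ofReal_zero, mul_zero] at h
    have hsum : ∑ x, (Complex.normSq (Bm i x k) : ℂ) = 0 := by
      rw [← h]
      refine (Finset.sum_congr rfl fun x _ => ?_).symm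
      rw [Complex.normSq_eq_conj_mul_self, Complex.star_def]
    have hsum' : ∑ x, Complex.normSq (Bm i x k) = 0 := by exact_mod_cast hsum
    have hx := (Finset.sum_eq_zero_iff_of_nonneg
      (fun x _ => Complex.normSq_nonneg (Bm i x k))).mp hsum' x (Finset.mem_univ x)
    exact Complex.normSq_eq_zero.mp hx
  have hBdecompw : ptraceRight ρ = ∑ p : {p : ι × C // lam p.2 ≠ 0},
      (q p.1.1 * lam p.1.2) • Matrix.of (fun x y => w p x * star (w p y)) := by
    have step1 : ptraceRight ρ = ∑ p : ι × C,
        q p.1 • Matrix.of (fun x y => Bm p.1 x p.2 * star (Bm p.1 y p.2)) := by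
      ext x x'
      rw [hRB]
      simp only [Matrix.sum_apply, Matrix.smul_apply, Matrix.of_apply, Complex.real_smul]
      rw [Fintype.sum_prod_type]
      refine Finset.sum_congr rfl fun i _ => ?_
      rw [hVB i]
      simp only [mul_apply, conjTranspose_apply]
      rw [Finset.mul_sum]
    rw [step1]
    have step2 : ∑ p : ι × C, q p.1 • Matrix.of (fun x y => Bm p.1 x p.2 * star (Bm p.1 y p.2))
        = ∑ p ∈ Finset.univ.filter (fun p : ι × C => lam p.2 ≠ 0),
            q p.1 • Matrix.of (fun x y => Bm p.1 x p.2 * star (Bm p.1 y p.2)) := by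
      refine (Finset.sum_subset (Finset.filter_subset _ _) fun p _ hp => ?_).symm
      have hp0 : lam p.2 = 0 := by
        by_contra hc
        exact hp (Finset.mem_filter.mpr ⟨Finset.mem_univ p, hc⟩)
      ext x y
      simp [hzerocol p.1 p.2 hp0 x]
    have hterm : ∀ p : {p : ι × C // lam p.2 ≠ 0},
        (q p.1.1 * lam p.1.2) • Matrix.of (fun x y => w p x * star (w p y))
        = q p.1.1 • Matrix.of (fun x y => Bm p.1.1 x p.1.2 * star (Bm p.1.1 y p.1.2)) := by
      intro p
      ext x y
      have hco : (q p.1.1 * lam p.1.2) * ((Real.sqrt (lam p.1.2))⁻¹ * (Real.sqrt (lam p.1.2))⁻¹)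
          = q p.1.1 := by
        rw [← mul_inv, Real.mul_self_sqrt (hlam _)]
        exact mul_inv_cancel_right₀ p.2 _
      simp only [Matrix.smul_apply, Matrix.of_apply, Complex.real_smul, w,
        star_mul', Complex.star_def, Complex.conj_ofReal]
      have hC2 : ((q p.1.1 * lam p.1.2 : ℝ) : ℂ)
          * ((((Real.sqrt (lam p.1.2))⁻¹ : ℝ) : ℂ) * (((Real.sqrt (lam p.1.2))⁻¹ : ℝ) : ℂ))
          = ((q p.1.1 : ℝ) : ℂ) := by
        rw [← Complex.ofReal_mul, ← Complex.ofReal_mul, hco]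
      calc ((q p.1.1 * lam p.1.2 : ℝ) : ℂ)
            * ((((Real.sqrt (lam p.1.2))⁻¹ : ℝ) : ℂ) * Bm p.1.1 x p.1.2
              * ((((Real.sqrt (lam p.1.2))⁻¹ : ℝ) : ℂ) * (starRingEnd ℂ) (Bm p.1.1 y p.1.2)))
          = ((q p.1.1 * lam p.1.2 : ℝ) : ℂ)
            * ((((Real.sqrt (lam p.1.2))⁻¹ : ℝ) : ℂ) * (((Real.sqrt (lam p.1.2))⁻¹ : ℝ) : ℂ))
            * (Bm p.1.1 x p.1.2 * (starRingEnd ℂ) (Bm p.1.1 y p.1.2)) := by ring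
        _ = ((q p.1.1 : ℝ) : ℂ) * (Bm p.1.1 x p.1.2 * (starRingEnd ℂ) (Bm p.1.1 y p.1.2)) := by
            rw [hC2]
    rw [step2,
      Finset.sum_subtype (p := fun p : ι × C => lam p.2 ≠ 0)
        (Finset.univ.filter (fun p : ι × C => lam p.2 ≠ 0))
        (fun p => by simp)
        (fun p : ι × C => q p.1 • Matrix.of (fun x y => Bm p.1 x p.2 * star (Bm p.1 y p.2)))]
    exact (Finset.sum_congr rfl fun p _ => hterm p).symm
  -- entropies
  set gf : ℝ → ℝ := fun x => x * Real.log x with hgf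
  have hg0 : gf 0 = 0 := by simp [gf]
  have hvNρ : vN ρ = -∑ i, gf (q i) := by
    unfold vN
    rw [dif_pos hρH]
    congr 1
    exact sum_g_eigenvalues ρ hρH q v honb hdecomp gf hg0
  have hvNC : vN (ptraceLeft ρ) = -∑ k, gf (lam k) := by
    unfold vN
    rw [dif_pos hCH]
  have hvNB : vN (ptraceRight ρ) = -∑ p : {p : ι × C // lam p.2 ≠ 0}, gf (q p.1.1 * lam p.1.2) := by
    unfold vN
    rw [dif_pos hBH]
    congr 1
    exact sum_g_eigenvalues (ptraceRight ρ) hBH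
      (fun p => q p.1.1 * lam p.1.2) w honbw hBdecompw gf hg0
  have hsplit : ∑ p : {p : ι × C // lam p.2 ≠ 0}, gf (q p.1.1 * lam p.1.2)
      = ∑ i, gf (q i) + ∑ k, gf (lam k) := by
    have h1 : ∑ p : {p : ι × C // lam p.2 ≠ 0}, gf (q p.1.1 * lam p.1.2)
        = ∑ p : ι × C, gf (q p.1 * lam p.2) := by
      rw [← Finset.sum_subtype (p := fun p : ι × C => lam p.2 ≠ 0)
        (Finset.univ.filter (fun p : ι × C => lam p.2 ≠ 0))
        (fun p => by simp)
        (fun p : ι × C => gf (q p.1 * lam p.2))]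
      refine Finset.sum_subset (Finset.filter_subset _ _) fun p _ hp => ?_
      have hp0 : lam p.2 = 0 := by
        by_contra hc
        exact hp (Finset.mem_filter.mpr ⟨Finset.mem_univ p, hc⟩)
      rw [hp0, mul_zero, hg0]
    have h2 : ∀ (i : ι) (k : C), gf (q i * lam k) = lam k * gf (q i) + q i * gf (lam k) := by
      intro i k
      rcases eq_or_lt_of_le (hlam k) with h | h
      · rw [← h]
        simp [gf]
      · simp only [gf]
        rw [Real.log_mul (ne_of_gt (hq i)) (ne_of_gt h)]
        ring
    rw [h1, Fintype.sum_prod_type]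
    have h3 : ∀ i : ι, ∑ k, gf (q i * lam k) = gf (q i) + q i * ∑ k, gf (lam k) := by
      intro i
      calc ∑ k, gf (q i * lam k) = ∑ k, (lam k * gf (q i) + q i * gf (lam k)) :=
            Finset.sum_congr rfl fun k _ => h2 i k
        _ = (∑ k, lam k) * gf (q i) + q i * ∑ k, gf (lam k) := by
            rw [Finset.sum_add_distrib, ← Finset.sum_mul, ← Finset.mul_sum]
        _ = gf (q i) + q i * ∑ k, gf (lam k) := by rw [hsumlam, one_mul]
    calc ∑ i, ∑ k, gf (q i * lam k) = ∑ i, (gf (q i) + q i * ∑ k, gf (lam k)) :=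
          Finset.sum_congr rfl fun i _ => h3 i
      _ = ∑ i, gf (q i) + (∑ i, q i) * ∑ k, gf (lam k) := by
          rw [Finset.sum_add_distrib, ← Finset.sum_mul]
      _ = ∑ i, gf (q i) + ∑ k, gf (lam k) := by rw [hsumq, one_mul]
  rw [hvNρ, hvNC, hvNB, hsplit]
  ring
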